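/- If X is realcompact (hence wD), then every subset Y of X that is countably compact in X has compact closure, provided X is completely regular Hausdorff; i.e., every realcompact completely regular Hausdorff space is a g-space. -/

import Mathlib

open Set Filter Topology TopologicalSpace

universe u

/-- `C_p(X)`: continuous real-valued functions on `X` with the topology of pointwise
convergence (subspace of `X → ℝ` with the product topology). -/
abbrev Cp (X : Type*) [TopologicalSpace X] : Type _ := {f : X → ℝ // Continuous f}

/-- A space is realcompact if it embeds as a closed subspace of a power of `ℝ`. -/
def Realcompact (X : Type u) [TopologicalSpace X] : Prop :=
  ∃ (I : Type u) (f : X → I → ℝ), IsClosedEmbedding f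

/-- `Y` is countably compact in `X`: every infinite subset of `Y` has a limit
(accumulation) point in `X`. -/
def CountablyCompactIn {X : Type*} [TopologicalSpace X] (Y : Set X) : Prop :=
  ∀ A ⊆ Y, A.Infinite → ∃ x : X, AccPt x (𝓟 A)

/-- A space is countably compact: every countable open cover has a finite subcover. -/
def CountablyCompact (X : Type*) [TopologicalSpace X] : Prop :=
  ∀ U : ℕ → Set X, (∀ n, IsOpen (U n)) → (⋃ n, U n) = univ →
    ∃ t : Finset ℕ, (⋃ n ∈ t, U n) = univ

/-- A space is countably tight if every point in the closure of a set is in the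
closure of a countable subset. -/
def CountablyTight (X : Type*) [TopologicalSpace X] : Prop :=
  ∀ (A : Set X) (x : X), x ∈ closure A → ∃ B ⊆ A, B.Countable ∧ x ∈ closure B

/-- Property wD: for every countably infinite closed discrete subspace `{d n}` there is an
infinite `S ⊆ ℕ` and a discrete family of open sets `U n` (`n ∈ S`) with `d n ∈ U n`. -/
def WD (X : Type*) [TopologicalSpace X] : Prop :=
  ∀ d : ℕ → X, Function.Injective d → IsClosed (Set.range d) →
    DiscreteTopology (Set.range d) →
    ∃ (S : Set ℕ) (U : ℕ → Set X), S.Infinite ∧ (∀ n ∈ S, IsOpen (U n)) ∧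
      (∀ n ∈ S, d n ∈ U n) ∧
      ∀ x : X, ∃ V ∈ 𝓝 x, {n | n ∈ S ∧ (V ∩ U n).Nonempty}.Subsingleton

/-- `N` is a network for `X`. -/
def IsNetwork {X : Type*} [TopologicalSpace X] (N : Set (Set X)) : Prop :=
  ∀ (x : X) (U : Set X), IsOpen U → x ∈ U → ∃ A ∈ N, x ∈ A ∧ A ⊆ U

/-- Every continuous real-valued function is bounded on a set that is countably compact
in a T1 space. -/
lemma bounded_of_countablyCompactIn {X : Type u} [TopologicalSpace X] [T1Space X]
    {Y : Set X} (hY : CountablyCompactIn Y) {g : X → ℝ} (hg : Continuous g) :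
    Bornology.IsBounded (g '' Y) := by
  by_contra hb
  -- get points with arbitrarily large values
  have hbig : ∀ n : ℕ, ∃ y ∈ Y, (n : ℝ) < |g y| := by
    intro n
    by_contra h
    push_neg at h
    exact hb (Metric.isBounded_iff_subset_closedBall 0 |>.2 ⟨n, by
      rintro _ ⟨y, hy, rfl⟩
      simpa [Real.dist_eq] using h y hy⟩)
  choose z hzY hzbig using hbig
  set A : Set X := Set.range z with hA
  have hAY : A ⊆ Y := by rintro _ ⟨n, rfl⟩; exact hzY n
  have hAinf : A.Infinite := by
    intro hfin
    have hbdd : BddAbove ((fun a => |g a|) '' A) := (hfin.image _).bddAbove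
    obtain ⟨M, hM⟩ := hbdd
    obtain ⟨n, hn⟩ := exists_nat_gt M
    have : |g (z n)| ≤ M := hM ⟨z n, ⟨n, rfl⟩, rfl⟩
    have : (n : ℝ) < M := lt_of_lt_of_le (hzbig n) this
    linarith
  obtain ⟨x, hx⟩ := hY A hAY hAinf
  -- neighborhood where |g| < |g x| + 1
  set V : Set X := g ⁻¹' (Metric.ball (g x) 1) with hV
  have hVnhds : V ∈ 𝓝 x := hg.continuousAt.preimage_mem_nhds
    (Metric.ball_mem_nhds _ one_pos)
  -- V ∩ A is finite
  have hfin : (V ∩ A).Finite := by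
    obtain ⟨N, hN⟩ := exists_nat_gt (|g x| + 1)
    apply Set.Finite.subset ((Set.finite_Iio N).image z)
    rintro a ⟨ha, n, rfl⟩
    refine ⟨n, ?_, rfl⟩
    have h1 : |g (z n)| < |g x| + 1 := by
      have := Metric.mem_ball.1 ha
      have h2 : |g (z n) - g x| < 1 := by simpa [Real.dist_eq] using this
      calc |g (z n)| ≤ |g (z n) - g x| + |g x| := by
              simpa using abs_sub_abs_le_abs_sub (g (z n)) (g x) |>.trans (le_abs_self _)
        _ < |g x| + 1 := by linarith
    have := lt_trans (hzbig n) (lt_trans h1 hN)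
    exact_mod_cast Set.mem_Iio.2 (by exact_mod_cast this)
  -- remove the finitely many points of V ∩ A other than x using T1
  have hF : ((V ∩ A) \ {x}).Finite := hfin.diff
  have hFc : ((V ∩ A) \ {x})ᶜ ∈ 𝓝 x := by
    have : IsClosed ((V ∩ A) \ {x}) := hF.isClosed
    exact this.isOpen_compl.mem_nhds (by simp)
  obtain ⟨y, ⟨hyU, hyA⟩, hyne⟩ := accPt_iff_nhds.1 hx _ (inter_mem hVnhds hFc)
  exact hyU.2 ⟨⟨hyU.1, hyA⟩, hyne⟩

theorem realcompact_gspace {X : Type u} [TopologicalSpace X]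
    [CompletelyRegularSpace X] [T2Space X] (hX : Realcompact X) :
    ∀ Y : Set X, CountablyCompactIn Y → IsCompact (closure Y) := by
  obtain ⟨I, f, hf⟩ := hX
  intro Y hY
  -- each coordinate of f is bounded on Y
  have hbdd : ∀ i, Bornology.IsBounded ((fun x => f x i) '' Y) := fun i =>
    bounded_of_countablyCompactIn hY ((continuous_apply i).comp hf.continuous)
  -- closure of f '' Y in ℝ^I is compact
  have hsub : f '' Y ⊆ Set.pi univ (fun i => closure ((fun x => f x i) '' Y)) := by
    rintro _ ⟨x, hx, rfl⟩ i _
    exact subset_closure ⟨x, hx, rfl⟩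
  have hKcompact : IsCompact (closure (f '' Y)) := by
    have hpi : IsCompact (Set.pi univ (fun i => closure ((fun x => f x i) '' Y))) :=
      isCompact_univ_pi fun i => (hbdd i).isCompact_closure
    exact hpi.of_isClosed_subset isClosed_closure
      (closure_minimal hsub (isClosed_set_pi fun i _ => isClosed_closure))
  -- pull back compactness via the proper map f
  have hproper : IsProperMap f := hf.isProperMap
  have hpre : IsCompact (f ⁻¹' closure (f '' Y)) := hproper.isCompact_preimage hKcompact
  exact hpre.of_isClosed_subset isClosed_closure
    (closure_minimal (fun x hx => subset_closure ⟨x, hx, rfl⟩)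
      (isClosed_closure.preimage hf.continuous))
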